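/- Let S be a finitely generated, cancellative, reduced commutative monoid minimally generated by A = {a_1,...,a_r}, and let φ_A : ℕ^r → S be the factorization map. If a ∈ S is not a Betti element (i.e., φ_A^{-1}(a) has a single R-class) but a has at least two factorizations, then there exists a Betti element a' ∈ S with a' ≺_S a (i.e., a - a' ∈ S and a' ≠ a). -/
import Mathlib


open Finset

variable {M : Type*} [AddCommMonoid M] {r : ℕ}

/-- The factorization homomorphism associated to the generating tuple `A`. -/
def phi (A : Fin r → M) (u : Fin r → ℕ) : M := ∑ i, u i • A i

/-- One step of the relation `R`: two factorizations of `a` with nonzero dot product. -/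
def step (A : Fin r → M) (a : M) (u v : Fin r → ℕ) : Prop :=
  phi A u = a ∧ phi A v = a ∧ (∑ i, u i * v i) ≠ 0

/-- The relation `R` on the fiber of `a`: connected by a chain of factorizations with
consecutive nonzero dot products. -/
def Rrel (A : Fin r → M) (a : M) : (Fin r → ℕ) → (Fin r → ℕ) → Prop :=
  Relation.ReflTransGen (step A a)

/-- `a` is a Betti element: its fiber has more than one `R`-class. -/
def IsBetti (A : Fin r → M) (a : M) : Prop :=
  ∃ u v : Fin r → ℕ, phi A u = a ∧ phi A v = a ∧ ¬ Rrel A a u v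

/-- `a` is Betti-minimal: a Betti element minimal with respect to `b ≺ a ↔ a - b ∈ S`. -/
def BettiMinimal (A : Fin r → M) (a : M) : Prop :=
  IsBetti A a ∧ ∀ b : M, IsBetti A b → (∃ c : M, a = b + c) → b = a

/-- `a` has a unique presentation: exactly two factorizations, with disjoint support. -/
def HasUniquePres (A : Fin r → M) (a : M) : Prop :=
  ∃ u v : Fin r → ℕ, u ≠ v ∧ {w : Fin r → ℕ | phi A w = a} = {u, v} ∧
    (∑ i, u i * v i) = 0

/-- The monoid generated by `A` is uniquely presented: every Betti element has exactly two
factorizations, with disjoint support. -/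
def UniquelyPresented (A : Fin r → M) : Prop :=
  ∀ a : M, IsBetti A a → HasUniquePres A a
lemma phi_add (A : Fin r → M) (u v : Fin r → ℕ) :
    phi A (u + v) = phi A u + phi A v := by
  simp [phi, add_smul, Finset.sum_add_distrib]

lemma phi_single (A : Fin r → M) (i : Fin r) : phi A (Pi.single i 1) = A i := by
  simp [phi, Pi.single_apply]

lemma first_step {A : Fin r → M} {a : M} {u v : Fin r → ℕ}
    (h : Rrel A a u v) (hne : u ≠ v) : ∃ w, step A a u w ∧ u ≠ w := by
  revert hne
  induction h with
  | refl => exact fun hne => absurd rfl hne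
  | @tail b c _ hbc ih =>
    intro hne
    rcases eq_or_ne u b with rfl | hub
    · exact ⟨c, hbc, hne⟩
    · exact ih hub

lemma aux_betti {M : Type*} [AddCancelCommMonoid M] {r : ℕ} (A : Fin r → M)
    (hred : ∀ x y : M, x + y = 0 → x = 0)
    (hmin : ∀ i : Fin r, ¬ ∃ u : Fin r → ℕ, u i = 0 ∧ phi A u = A i)
    (n : ℕ) :
    ∀ u : Fin r → ℕ, (∑ i, u i) = n → ∀ (a : M) (v : Fin r → ℕ),
      phi A u = a → phi A v = a → u ≠ v →
      ∃ a' : M, IsBetti A a' ∧ ∃ c : M, a = a' + c := by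
  induction n using Nat.strong_induction_on with
  | _ n ih =>
    intro u hn a v hu hv hne
    by_cases hb : IsBetti A a
    · exact ⟨a, hb, 0, (add_zero a).symm⟩
    · -- all factorizations are R-related
      have hrel : Rrel A a u v := by
        by_contra hr
        exact hb ⟨u, v, hu, hv, hr⟩
      obtain ⟨w, ⟨-, hw, hdot⟩, huw⟩ := first_step hrel hne
      obtain ⟨i, -, hi⟩ := Finset.exists_ne_zero_of_sum_ne_zero hdot
      obtain ⟨hui, hwi⟩ := Nat.mul_ne_zero_iff.mp hi
      set u' : Fin r → ℕ := u - Pi.single i 1 with hu'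
      set w' : Fin r → ℕ := w - Pi.single i 1 with hw'
      have hu'eq : u' + Pi.single i 1 = u := by
        funext j
        rcases eq_or_ne j i with rfl | hji
        · simp [hu', Pi.single_apply]; omega
        · simp [hu', Pi.single_apply, hji]
      have hw'eq : w' + Pi.single i 1 = w := by
        funext j
        rcases eq_or_ne j i with rfl | hji
        · simp [hw', Pi.single_apply]; omega
        · simp [hw', Pi.single_apply, hji]
      have hphiu : phi A u' + A i = a := by
        rw [← phi_single A i, ← phi_add, hu'eq, hu]
      have hphiw : phi A w' + A i = a := by
        rw [← phi_single A i, ← phi_add, hw'eq, hw]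
      have hphiuw : phi A w' = phi A u' := by
        have := hphiu.trans hphiw.symm
        exact (add_right_cancel this).symm
      have hne' : u' ≠ w' := by
        intro h
        exact huw (by rw [← hu'eq, ← hw'eq, h])
      have hsum : (∑ j, u' j) < n := by
        rw [← hn]
        apply Finset.sum_lt_sum
        · intro j _
          rcases eq_or_ne j i with rfl | hji
          · simp [hu', Pi.single_apply]
          · simp [hu', Pi.single_apply, hji]
        · refine ⟨i, Finset.mem_univ i, ?_⟩
          have : u i ≠ 0 := hui
          simp only [hu', Pi.sub_apply, Pi.single_apply, eq_self_iff_true, if_true]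
          omega
      obtain ⟨a'', hb'', c, hc⟩ :=
        ih _ hsum u' rfl (phi A u') w' rfl hphiuw hne'
      refine ⟨a'', hb'', c + A i, ?_⟩
      rw [← hphiu, hc, add_assoc]

/-- If `a` is not a Betti element but has at least two factorizations, then there is a
Betti element `a'` with `a' ≺_S a`, i.e. `a' ≠ a` and `a - a' ∈ S`. -/
theorem stmt0 {M : Type*} [AddCancelCommMonoid M] {r : ℕ} (A : Fin r → M)
    (hred : ∀ x y : M, x + y = 0 → x = 0)
    (hgen : ∀ s : M, ∃ u : Fin r → ℕ, phi A u = s)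
    (hmin : ∀ i : Fin r, ¬ ∃ u : Fin r → ℕ, u i = 0 ∧ phi A u = A i)
    (a : M) (hnb : ¬ IsBetti A a)
    (u v : Fin r → ℕ) (hu : phi A u = a) (hv : phi A v = a) (huv : u ≠ v) :
    ∃ a' : M, IsBetti A a' ∧ a' ≠ a ∧ ∃ c : M, a = a' + c := by
  obtain ⟨a', hb', c, hc⟩ := aux_betti A hred hmin (∑ i, u i) u rfl a v hu hv huv
  refine ⟨a', hb', ?_, c, hc⟩
  rintro rfl
  exact hnb hb'
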